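/- For every constant C > 0 there exists b > 1 such that, for X and Y independent with common density f(x) = 1/(x log b) · 1_{(1,b)}(x), one has H(X+Y) > C·H(X), where H(W) = exp(2 h(W)) is the entropy power. -/

import Mathlib

open MeasureTheory Real

lemma int_ite (a c : ℝ) (h : a ≤ c) (φ : ℝ → ℝ) :
    ∫ x, (if a < x ∧ x < c then φ x else 0) = ∫ x in a..c, φ x := by
  have he : (fun x => if a < x ∧ x < c then φ x else 0) = Set.indicator (Set.Ioo a c) φ := by
    funext x; simp [Set.indicator_apply, Set.mem_Ioo]
  rw [he, MeasureTheory.integral_indicator measurableSet_Ioo,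
      intervalIntegral.integral_of_le h, MeasureTheory.integral_Ioc_eq_integral_Ioo]

lemma ii_log_div (y c : ℝ) (h0 : 0 < y) (h : y ≤ c) :
    ∫ x in y..c, Real.log x / x = ((Real.log c)^2 - (Real.log y)^2)/2 := by
  have hC : ∀ x ∈ Set.uIcc y c, HasDerivAt (fun t => (Real.log t)^2/2) (Real.log x / x) x := by
    intro x hx
    rw [Set.uIcc_of_le h] at hx
    have hx0 : x ≠ 0 := by nlinarith [hx.1]
    have := ((Real.hasDerivAt_log hx0).pow 2).div_const 2
    refine this.congr_deriv ?_
    have : 0 < x := lt_of_lt_of_le h0 hx.1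
    field_simp; ring
  rw [intervalIntegral.integral_eq_sub_of_hasDerivAt hC]
  · ring
  · apply ContinuousOn.intervalIntegrable
    apply ContinuousOn.div
    · apply ContinuousOn.log continuousOn_id
      intro x hx; rw [Set.uIcc_of_le h] at hx; intro h'; simp at h'; nlinarith [hx.1]
    · exact continuousOn_id
    · intro x hx; rw [Set.uIcc_of_le h] at hx; nlinarith [hx.1]

lemma ii_sq_log_div (y c : ℝ) (h0 : 0 < y) (h : y ≤ c) :
    ∫ x in y..c, (Real.log x)^2 / x = ((Real.log c)^3 - (Real.log y)^3)/3 := by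
  have hC : ∀ x ∈ Set.uIcc y c, HasDerivAt (fun t => (Real.log t)^3/3) ((Real.log x)^2 / x) x := by
    intro x hx
    rw [Set.uIcc_of_le h] at hx
    have hx0 : x ≠ 0 := by nlinarith [hx.1]
    have := ((Real.hasDerivAt_log hx0).pow 3).div_const 3
    refine this.congr_deriv ?_
    have : 0 < x := lt_of_lt_of_le h0 hx.1
    field_simp; ring
  rw [intervalIntegral.integral_eq_sub_of_hasDerivAt hC]
  · ring
  · apply ContinuousOn.intervalIntegrable
    apply ContinuousOn.div
    · apply ContinuousOn.pow
      apply ContinuousOn.log continuousOn_id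
      intro x hx; rw [Set.uIcc_of_le h] at hx; intro h'; simp at h'; nlinarith [hx.1]
    · exact continuousOn_id
    · intro x hx; rw [Set.uIcc_of_le h] at hx; nlinarith [hx.1]

lemma ii_partial_frac (x : ℝ) (hx : 2 < x) :
    ∫ y in (1:ℝ)..(x-1), (1/y + 1/(x-y)) = 2 * Real.log (x-1) := by
  have h : (1:ℝ) ≤ x - 1 := by linarith
  have hC : ∀ y ∈ Set.uIcc (1:ℝ) (x-1),
      HasDerivAt (fun t => Real.log t - Real.log (x - t)) (1/y + 1/(x-y)) y := by
    intro y hy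
    rw [Set.uIcc_of_le h] at hy
    have hy0 : (0:ℝ) < y := by linarith [hy.1]
    have hxy : (0:ℝ) < x - y := by linarith [hy.2]
    have h1 := Real.hasDerivAt_log hy0.ne'
    have h2 : HasDerivAt (fun t : ℝ => Real.log (x - t)) (-(x - y)⁻¹) y := by
      have hsub : HasDerivAt (fun t : ℝ => x - t) (-1) y := by
        simpa using (hasDerivAt_id y).const_sub x
      exact ((Real.hasDerivAt_log hxy.ne').comp y hsub).congr_deriv (by ring)
    have := h1.sub h2
    refine this.congr_deriv ?_
    field_simp; ring
  rw [intervalIntegral.integral_eq_sub_of_hasDerivAt hC]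
  · have h1 : x - (x - 1) = 1 := by ring
    simp [Real.log_one, h1]; ring
  · apply ContinuousOn.intervalIntegrable
    apply ContinuousOn.add
    · apply ContinuousOn.div continuousOn_const continuousOn_id
      intro y hy; rw [Set.uIcc_of_le h] at hy; simp; nlinarith [hy.1]
    · apply ContinuousOn.div continuousOn_const (continuousOn_const.sub continuousOn_id)
      intro y hy; rw [Set.uIcc_of_le h] at hy; simp only [Pi.sub_apply, id_eq]; nlinarith [hy.2]

noncomputable def F (b : ℝ) : ℝ → ℝ :=
  fun x => if 1 < x ∧ x < b then 1/(x * Real.log b) else 0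

lemma F_def (b x : ℝ) : F b x = if 1 < x ∧ x < b then 1/(x * Real.log b) else 0 := rfl

lemma measurable_F (b : ℝ) : Measurable (F b) := by
  unfold F
  apply Measurable.ite
  · exact (measurableSet_lt measurable_const measurable_id).inter
      (measurableSet_lt measurable_id measurable_const)
  · exact (measurable_id.mul_const _).const_div 1
  · exact measurable_const

lemma F_nonneg (b : ℝ) (hb : 1 < b) (x : ℝ) : 0 ≤ F b x := by
  have hL : 0 < Real.log b := Real.log_pos hb
  unfold F
  split
  · next h =>
    have hx : (0:ℝ) < x := by linarith [h.1]
    positivity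
  · exact le_refl 0

lemma F_pos_mem (b : ℝ) (x : ℝ) (h : F b x ≠ 0) : 1 < x ∧ x < b := by
  by_contra hc
  exact h (by simp [F_def, hc])

lemma F_le (b : ℝ) (hb : 1 < b) (x : ℝ) : F b x ≤ 1 / Real.log b := by
  have hL : 0 < Real.log b := Real.log_pos hb
  unfold F
  split
  · next h =>
    apply div_le_div_of_nonneg_left (by norm_num) hL
    nlinarith [h.1]
  · positivity

lemma integrable_F (b : ℝ) (hb : 1 < b) : Integrable (F b) := by
  have hL : 0 < Real.log b := Real.log_pos hb
  apply Integrable.mono' (g := Set.indicator (Set.Icc 1 b) (fun _ => 1/Real.log b))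
  · exact (integrable_indicator_iff measurableSet_Icc).2
      (integrableOn_const (by simp [Real.volume_Icc]))
  · exact (measurable_F b).aestronglyMeasurable
  · filter_upwards with x
    rw [Real.norm_of_nonneg (F_nonneg b hb x)]
    by_cases h : 1 < x ∧ x < b
    · rw [Set.indicator_of_mem (Set.mem_Icc.2 ⟨le_of_lt h.1, le_of_lt h.2⟩)]
      exact F_le b hb x
    · simp [F_def, h]
      exact Set.indicator_nonneg (fun _ _ => by positivity) x

lemma integral_F (b : ℝ) (hb : 1 < b) : ∫ x, F b x = 1 := by
  have hL : 0 < Real.log b := Real.log_pos hb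
  unfold F
  rw [int_ite 1 b (le_of_lt hb)]
  have hcong : Set.EqOn (fun x => 1/(x * Real.log b)) (fun x => (1/Real.log b) * (1/x))
      (Set.uIcc 1 b) := by
    intro x hx
    rw [Set.uIcc_of_le (le_of_lt hb)] at hx
    have : (0:ℝ) < x := by linarith [hx.1]
    field_simp
  rw [intervalIntegral.integral_congr hcong, intervalIntegral.integral_const_mul,
      integral_one_div_of_pos (by norm_num) (by linarith)]
  field_simp

lemma integral_F_log_F (b : ℝ) (hb : 1 < b) :
    ∫ x, F b x * Real.log (F b x) = -(Real.log b / 2 + Real.log (Real.log b)) := by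
  have hL : 0 < Real.log b := Real.log_pos hb
  set L := Real.log b with hLdef
  have he : (fun x => F b x * Real.log (F b x)) =
      (fun x => if 1 < x ∧ x < b then (1/(x*L)) * Real.log (1/(x*L)) else 0) := by
    funext x
    by_cases h : 1 < x ∧ x < b <;> simp [F_def, h, ← hLdef]
  rw [he, int_ite 1 b (le_of_lt hb)]
  have hcong : Set.EqOn (fun x => (1/(x*L)) * Real.log (1/(x*L)))
      (fun x => (-(1/L)) * (Real.log x / x) + (-(Real.log L / L)) * (1/x)) (Set.uIcc 1 b) := by
    intro x hx
    rw [Set.uIcc_of_le (le_of_lt hb)] at hx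
    have hx0 : (0:ℝ) < x := by linarith [hx.1]
    have h1 : Real.log (1/(x*L)) = -(Real.log x + Real.log L) := by
      rw [one_div, Real.log_inv, Real.log_mul hx0.ne' hL.ne']
    show 1/(x*L) * Real.log (1/(x*L)) = -(1/L) * (Real.log x / x) + -(Real.log L / L) * (1/x)
    rw [h1]; field_simp; ring
  rw [intervalIntegral.integral_congr hcong, intervalIntegral.integral_add, 
      intervalIntegral.integral_const_mul, intervalIntegral.integral_const_mul,
      ii_log_div 1 b (by norm_num) (le_of_lt hb),
      integral_one_div_of_pos (by norm_num) (by linarith)]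
  · rw [Real.log_one]
    field_simp
    ring
  · apply ContinuousOn.intervalIntegrable
    apply ContinuousOn.mul continuousOn_const
    apply ContinuousOn.div (Real.continuousOn_log.mono ?_) continuousOn_id ?_
    · intro x hx; rw [Set.uIcc_of_le (le_of_lt hb)] at hx
      simp only [Set.mem_compl_iff, Set.mem_singleton_iff]
      intro h'; nlinarith [hx.1]
    · intro x hx; rw [Set.uIcc_of_le (le_of_lt hb)] at hx
      simp only [id]; intro h'; nlinarith [hx.1]
  · apply ContinuousOn.intervalIntegrable
    apply ContinuousOn.mul continuousOn_const
    apply ContinuousOn.div continuousOn_const continuousOn_id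
    intro x hx; rw [Set.uIcc_of_le (le_of_lt hb)] at hx
    simp only [id]; intro h'; nlinarith [hx.1]

lemma Fprod_vanish (b x y : ℝ) (h : F b (x - y) * F b y ≠ 0) :
    (2 < x ∧ x < 2*b) ∧ (1 < y ∧ y < b) := by
  have h1 : F b (x - y) ≠ 0 := fun hh => h (by rw [hh, zero_mul])
  have h2 : F b y ≠ 0 := fun hh => h (by rw [hh, mul_zero])
  have m1 := F_pos_mem b _ h1
  have m2 := F_pos_mem b _ h2
  exact ⟨⟨by linarith [m1.1, m2.1], by linarith [m1.2, m2.2]⟩, m2⟩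

lemma measurable_Fprod (b : ℝ) :
    Measurable (fun p : ℝ × ℝ => F b (p.1 - p.2) * F b p.2) :=
  ((measurable_F b).comp (measurable_fst.sub measurable_snd)).mul
    ((measurable_F b).comp measurable_snd)

lemma integrable_domination (b c : ℝ) (hb : 1 < b) (hc : 0 ≤ c) (G : ℝ × ℝ → ℝ)
    (hm : Measurable G)
    (hbd : ∀ p : ℝ × ℝ, G p ≠ 0 → ((2 < p.1 ∧ p.1 < 2*b) ∧ (1 < p.2 ∧ p.2 < b)) ∧ |G p| ≤ c) :
    Integrable G (volume.prod volume) := by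
  apply Integrable.mono'
    (g := Set.indicator (Set.Icc (2:ℝ) (2*b) ×ˢ Set.Icc (1:ℝ) b) (fun _ => c))
  · apply (integrable_indicator_iff (measurableSet_Icc.prod measurableSet_Icc)).2
    refine integrableOn_const ?_ (by simp)
    rw [Measure.prod_prod, Real.volume_Icc, Real.volume_Icc]
    exact ENNReal.mul_ne_top ENNReal.ofReal_ne_top ENNReal.ofReal_ne_top
  · exact hm.aestronglyMeasurable
  · filter_upwards with p
    by_cases h : G p = 0
    · rw [h]; simp
      exact Set.indicator_nonneg (fun _ _ => hc) p
    · obtain ⟨⟨hx, hy⟩, hle⟩ := hbd p h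
      rw [Set.indicator_of_mem]
      · exact hle
      · exact Set.mem_prod.2 ⟨Set.mem_Icc.2 ⟨le_of_lt hx.1, le_of_lt hx.2⟩,
          Set.mem_Icc.2 ⟨le_of_lt hy.1, le_of_lt hy.2⟩⟩

lemma F_bound_simple (b : ℝ) (hb : 1 < b) (hL1 : 1 ≤ Real.log b) (x : ℝ) : F b x ≤ 1 :=
  le_trans (F_le b hb x) (by rw [div_le_one (by linarith)]; linarith)

lemma integrable_Fprod (b : ℝ) (hb : 1 < b) (hL1 : 1 ≤ Real.log b) :
    Integrable (fun p : ℝ × ℝ => F b (p.1 - p.2) * F b p.2) (volume.prod volume) := by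
  apply integrable_domination b 1 hb (by norm_num) _ (measurable_Fprod b)
  intro p h
  refine ⟨Fprod_vanish b p.1 p.2 h, ?_⟩
  rw [abs_of_nonneg (mul_nonneg (F_nonneg b hb _) (F_nonneg b hb _))]
  exact mul_le_one₀ (F_bound_simple b hb hL1 _) (F_nonneg b hb _) (F_bound_simple b hb hL1 _)

lemma log_2b_le (b : ℝ) (hb2 : 2 ≤ b) : Real.log (2*b) ≤ 2 * Real.log b := by
  have h2 : Real.log 2 ≤ Real.log b := Real.log_le_log (by norm_num) hb2
  rw [Real.log_mul (by norm_num) (by linarith)]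
  linarith

lemma integrable_FprodLog (b : ℝ) (hb2 : 2 ≤ b) (hL1 : 1 ≤ Real.log b) :
    Integrable (fun p : ℝ × ℝ => F b (p.1 - p.2) * F b p.2 * Real.log p.1)
      (volume.prod volume) := by
  have hb : (1:ℝ) < b := by linarith
  apply integrable_domination b (2 * Real.log b) hb (by linarith) _
    ((measurable_Fprod b).mul (Real.measurable_log.comp measurable_fst))
  intro p h
  have h0 : F b (p.1 - p.2) * F b p.2 ≠ 0 := by
    intro hh; exact h (by show F b (p.1 - p.2) * F b p.2 * Real.log p.1 = 0; rw [hh, zero_mul])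
  have hv := Fprod_vanish b p.1 p.2 h0
  refine ⟨hv, ?_⟩
  show |F b (p.1 - p.2) * F b p.2 * Real.log p.1| ≤ _
  rw [abs_mul]
  have hx1 : (1:ℝ) < p.1 := by linarith [hv.1.1]
  have hlogpos : 0 < Real.log p.1 := Real.log_pos hx1
  have hlogle : Real.log p.1 ≤ 2 * Real.log b := by
    calc Real.log p.1 ≤ Real.log (2*b) := Real.log_le_log (by linarith) (le_of_lt hv.1.2)
    _ ≤ 2 * Real.log b := log_2b_le b hb2
  calc |F b (p.1 - p.2) * F b p.2| * |Real.log p.1|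
      ≤ 1 * (2 * Real.log b) := by
        apply mul_le_mul _ _ (abs_nonneg _) (by norm_num)
        · rw [abs_of_nonneg (mul_nonneg (F_nonneg b hb _) (F_nonneg b hb _))]
          exact mul_le_one₀ (F_bound_simple b hb hL1 _) (F_nonneg b hb _)
            (F_bound_simple b hb hL1 _)
        · rw [abs_of_pos hlogpos]; exact hlogle
    _ = 2 * Real.log b := one_mul _

noncomputable def gF (b : ℝ) : ℝ → ℝ := fun x => ∫ y, F b (x - y) * F b y

lemma gF_nonneg (b : ℝ) (hb : 1 < b) (x : ℝ) : 0 ≤ gF b x :=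
  integral_nonneg (fun y => mul_nonneg (F_nonneg b hb _) (F_nonneg b hb _))

lemma gF_eq_zero (b x : ℝ) (h : ¬ (2 < x ∧ x < 2*b)) : gF b x = 0 := by
  unfold gF
  have : ∀ y : ℝ, F b (x - y) * F b y = 0 := by
    intro y
    by_contra hc
    exact h (Fprod_vanish b x y hc).1
  simp [this]

lemma integrable_gF (b : ℝ) (hb : 1 < b) (hL1 : 1 ≤ Real.log b) : Integrable (gF b) :=
  (integrable_Fprod b hb hL1).integral_prod_left

lemma integral_gF (b : ℝ) (hb : 1 < b) (hL1 : 1 ≤ Real.log b) : ∫ x, gF b x = 1 := by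
  unfold gF
  rw [MeasureTheory.integral_integral_swap (integrable_Fprod b hb hL1)]
  have hinner : ∀ y : ℝ, ∫ x, F b (x - y) * F b y ∂volume = F b y := by
    intro y
    rw [MeasureTheory.integral_mul_const]
    rw [MeasureTheory.integral_sub_right_eq_self (F b) y]
    rw [integral_F b hb, one_mul]
  simp_rw [hinner]
  exact integral_F b hb

lemma gF_le (b : ℝ) (hb2 : 2 ≤ b) (hL1 : 1 ≤ Real.log b) (x : ℝ)
    (hx : 2 < x ∧ x < 2*b) : gF b x ≤ 4 / (x * Real.log b) := by
  have hb : (1:ℝ) < b := by linarith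
  have hL : (0:ℝ) < Real.log b := by linarith
  set L := Real.log b with hLdef
  have hx0 : (0:ℝ) < x := by linarith [hx.1]
  set ψ : ℝ → ℝ := fun y => if 1 < y ∧ y < x - 1 then (1/(x*L^2)) * (1/y + 1/(x-y)) else 0
    with hψ
  have hψm : Measurable ψ := by
    apply Measurable.ite
    · exact (measurableSet_lt measurable_const measurable_id).inter
        (measurableSet_lt measurable_id measurable_const)
    · apply Measurable.const_mul
      exact (measurable_id.const_div 1).add ((measurable_const.sub measurable_id).const_div 1)
    · exact measurable_const
  have hψnonneg : ∀ y, 0 ≤ ψ y := by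
    intro y
    rw [hψ]; dsimp only
    split
    · next h =>
      have h1 : (0:ℝ) < y := by linarith [h.1]
      have h2 : (0:ℝ) < x - y := by linarith [h.2]
      positivity
    · exact le_refl 0
  have hψle : ∀ y, ψ y ≤ Set.indicator (Set.Icc (1:ℝ) (x-1)) (fun _ => 2/(x*L^2)) y := by
    intro y
    rw [hψ]; dsimp only
    split
    · next h =>
      rw [Set.indicator_of_mem (Set.mem_Icc.2 ⟨le_of_lt h.1, le_of_lt h.2⟩)]
      have h1 : (1:ℝ) ≤ y := le_of_lt h.1
      have h2 : (1:ℝ) ≤ x - y := by linarith [h.2]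
      have e1 : 1/y ≤ (1:ℝ) := by rw [div_le_one (by linarith)]; exact h1
      have e2 : 1/(x-y) ≤ (1:ℝ) := by rw [div_le_one (by linarith)]; exact h2
      have : (1:ℝ)/(x*L^2) * (1/y + 1/(x-y)) ≤ (1/(x*L^2)) * 2 := by
        apply mul_le_mul_of_nonneg_left (by linarith) (by positivity)
      calc (1:ℝ)/(x*L^2) * (1/y + 1/(x-y)) ≤ (1/(x*L^2)) * 2 := this
        _ = 2/(x*L^2) := by ring
    · next h =>
      exact Set.indicator_nonneg (fun _ _ => by positivity) y
  have hψint : Integrable ψ := by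
    apply Integrable.mono' (g := Set.indicator (Set.Icc (1:ℝ) (x-1)) (fun _ => 2/(x*L^2)))
    · apply (integrable_indicator_iff measurableSet_Icc).2
      refine integrableOn_const ?_ (by simp)
      rw [Real.volume_Icc]; exact ENNReal.ofReal_ne_top
    · exact hψm.aestronglyMeasurable
    · filter_upwards with y
      rw [Real.norm_of_nonneg (hψnonneg y)]
      exact hψle y
  have hpt : ∀ y, F b (x - y) * F b y ≤ ψ y := by
    intro y
    by_cases h : F b (x - y) * F b y = 0
    · rw [h]; exact hψnonneg y
    · have h1 : F b (x - y) ≠ 0 := fun hh => h (by rw [hh, zero_mul])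
      have h2 : F b y ≠ 0 := fun hh => h (by rw [hh, mul_zero])
      have m1 := F_pos_mem b _ h1
      have m2 := F_pos_mem b _ h2
      have hy0 : (0:ℝ) < y := by linarith [m2.1]
      have hxy0 : (0:ℝ) < x - y := by linarith [m1.1]
      have hcond : 1 < y ∧ y < x - 1 := ⟨m2.1, by linarith [m1.1]⟩
      rw [hψ]
      simp only [hcond, and_self, if_true]
      rw [F_def, F_def, if_pos m1, if_pos m2, ← hLdef]
      apply le_of_eq
      field_simp
      ring
  have hle1 : gF b x ≤ ∫ y, ψ y := by
    unfold gF
    apply MeasureTheory.integral_mono_of_nonneg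
    · filter_upwards with y
      exact mul_nonneg (F_nonneg b hb _) (F_nonneg b hb _)
    · exact hψint
    · filter_upwards with y; exact hpt y
  have hval : ∫ y, ψ y = (1/(x*L^2)) * (2 * Real.log (x-1)) := by
    rw [hψ]
    have h21 : (1:ℝ) ≤ x - 1 := by linarith [hx.1]
    rw [int_ite 1 (x-1) h21 (fun y => (1/(x*L^2)) * (1/y + 1/(x-y)))]
    rw [intervalIntegral.integral_const_mul, ii_partial_frac x hx.1]
  have hlog : Real.log (x - 1) ≤ 2 * L := by
    calc Real.log (x-1) ≤ Real.log (2*b) := Real.log_le_log (by linarith [hx.1]) (by linarith [hx.2])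
      _ ≤ 2 * L := log_2b_le b hb2
  calc gF b x ≤ (1/(x*L^2)) * (2 * Real.log (x-1)) := by rw [← hval]; exact hle1
    _ ≤ (1/(x*L^2)) * (2 * (2*L)) := by
        apply mul_le_mul_of_nonneg_left (by linarith) (by positivity)
    _ = 4 / (x * L) := by field_simp; ring

lemma abs_mul_log_le_one (t : ℝ) (h0 : 0 ≤ t) (h1 : t ≤ 1) : |t * Real.log t| ≤ 1 := by
  rcases eq_or_lt_of_le h0 with h | h
  · rw [← h]; simp
  · have hlog : Real.log t ≤ 0 := Real.log_nonpos (le_of_lt h) h1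
    rw [abs_of_nonpos (mul_nonpos_of_nonneg_of_nonpos (le_of_lt h) hlog)]
    have hinv : Real.log t⁻¹ ≤ t⁻¹ - 1 := Real.log_le_sub_one_of_pos (by positivity)
    rw [Real.log_inv] at hinv
    have : -(t * Real.log t) = t * (-Real.log t) := by ring
    rw [this]
    calc t * (-Real.log t) ≤ t * (t⁻¹ - 1) := by
          apply mul_le_mul_of_nonneg_left hinv (le_of_lt h)
      _ = 1 - t := by field_simp
      _ ≤ 1 := by linarith

lemma gF_le_one (b : ℝ) (hb2 : 2 ≤ b) (hL2 : 2 ≤ Real.log b) (x : ℝ) : gF b x ≤ 1 := by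
  by_cases h : 2 < x ∧ x < 2*b
  · calc gF b x ≤ 4 / (x * Real.log b) := gF_le b hb2 (by linarith) x h
      _ ≤ 1 := by
          rw [div_le_one (by nlinarith [h.1])]
          nlinarith [h.1]
  · rw [gF_eq_zero b x h]; norm_num

lemma integrable_gF_log_gF (b : ℝ) (hb2 : 2 ≤ b) (hL2 : 2 ≤ Real.log b) :
    Integrable (fun x => gF b x * Real.log (gF b x)) := by
  have hb : (1:ℝ) < b := by linarith
  apply Integrable.mono' (g := Set.indicator (Set.Icc (2:ℝ) (2*b)) (fun _ => 1))
  · apply (integrable_indicator_iff measurableSet_Icc).2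
    refine integrableOn_const ?_ (by simp)
    rw [Real.volume_Icc]; exact ENNReal.ofReal_ne_top
  · have hg := (integrable_gF b hb (by linarith)).aestronglyMeasurable
    apply AEStronglyMeasurable.mul hg
    exact (Real.measurable_log.comp_aemeasurable hg.aemeasurable).aestronglyMeasurable
  · filter_upwards with x
    by_cases h : 2 < x ∧ x < 2*b
    · rw [Set.indicator_of_mem (Set.mem_Icc.2 ⟨le_of_lt h.1, le_of_lt h.2⟩)]
      exact abs_mul_log_le_one _ (gF_nonneg b hb x) (gF_le_one b hb2 hL2 x)
    · rw [gF_eq_zero b x h]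
      simp
      exact Set.indicator_nonneg (fun _ _ => by norm_num) x

lemma gF_mul_log_eq (b : ℝ) :
    (fun x => gF b x * Real.log x) =
      (fun x => ∫ y, F b (x - y) * F b y * Real.log x) := by
  funext x
  rw [MeasureTheory.integral_mul_const]
  rfl

lemma integrable_gF_mul_log (b : ℝ) (hb2 : 2 ≤ b) (hL1 : 1 ≤ Real.log b) :
    Integrable (fun x => gF b x * Real.log x) := by
  rw [gF_mul_log_eq b]
  exact (integrable_FprodLog b hb2 hL1).integral_prod_left

lemma inner_max_integral (b : ℝ) (hb : 1 < b) (y : ℝ) (hy : 1 < y ∧ y < b) :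
    ∫ u, F b u * max (Real.log u) (Real.log y) =
      ((Real.log y)^2 + (Real.log b)^2) / (2 * Real.log b) := by
  have hL : 0 < Real.log b := Real.log_pos hb
  set L := Real.log b with hLdef
  have he : (fun u => F b u * max (Real.log u) (Real.log y)) =
      (fun u => if 1 < u ∧ u < b then (1/(u*L)) * max (Real.log u) (Real.log y) else 0) := by
    funext u
    by_cases h : 1 < u ∧ u < b <;> simp [F_def, h, ← hLdef]
  rw [he, int_ite 1 b (le_of_lt hb)]
  have hsplit : ∫ u in (1:ℝ)..b, (1/(u*L)) * max (Real.log u) (Real.log y) =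
      (∫ u in (1:ℝ)..y, (1/(u*L)) * max (Real.log u) (Real.log y)) +
      ∫ u in y..b, (1/(u*L)) * max (Real.log u) (Real.log y) := by
    rw [intervalIntegral.integral_add_adjacent_intervals] <;>
    · apply ContinuousOn.intervalIntegrable
      apply ContinuousOn.mul
      · apply ContinuousOn.div continuousOn_const (continuousOn_id.mul continuousOn_const)
        intro u hu h'
        rcases Set.mem_uIcc.1 hu with hc | hc
        · simp only [Pi.mul_apply, id_eq] at h'; nlinarith [hc.1, hc.2, hy.1]
        · simp only [Pi.mul_apply, id_eq] at h'; nlinarith [hc.1, hc.2, hy.1, hy.2]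
      · apply ContinuousOn.sup _ continuousOn_const
        apply Real.continuousOn_log.mono
        intro u hu
        rcases Set.mem_uIcc.1 hu with hc | hc
        · simp only [Set.mem_compl_iff, Set.mem_singleton_iff]; intro h'; nlinarith [hc.1, hc.2, hy.1]
        · simp only [Set.mem_compl_iff, Set.mem_singleton_iff]; intro h'; nlinarith [hc.1, hc.2, hy.1, hy.2]
  rw [hsplit]
  have hy1 : (1:ℝ) ≤ y := le_of_lt hy.1
  have hyb : y ≤ b := le_of_lt hy.2
  have hc1 : Set.EqOn (fun u => (1/(u*L)) * max (Real.log u) (Real.log y))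
      (fun u => (Real.log y / L) * (1/u)) (Set.uIcc 1 y) := by
    intro u hu
    rw [Set.uIcc_of_le hy1] at hu
    have hu0 : (0:ℝ) < u := by linarith [hu.1]
    have : max (Real.log u) (Real.log y) = Real.log y :=
      max_eq_right (Real.log_le_log hu0 hu.2)
    dsimp only
    rw [this]; ring
  have hc2 : Set.EqOn (fun u => (1/(u*L)) * max (Real.log u) (Real.log y))
      (fun u => (1/L) * (Real.log u / u)) (Set.uIcc y b) := by
    intro u hu
    rw [Set.uIcc_of_le hyb] at hu
    have hu0 : (0:ℝ) < u := by linarith [hu.1, hy.1]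
    have : max (Real.log u) (Real.log y) = Real.log u :=
      max_eq_left (Real.log_le_log (by linarith [hy.1]) hu.1)
    dsimp only
    rw [this]; ring
  rw [intervalIntegral.integral_congr hc1, intervalIntegral.integral_congr hc2,
      intervalIntegral.integral_const_mul, intervalIntegral.integral_const_mul,
      integral_one_div_of_pos (by norm_num) (by linarith),
      ii_log_div y b (by linarith) hyb]
  rw [div_one]
  rw [← hLdef]
  field_simp
  ring

lemma integral_F_phi (b : ℝ) (hb : 1 < b) :
    ∫ y, F b y * (((Real.log y)^2 + (Real.log b)^2) / (2 * Real.log b)) =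
      2 * Real.log b / 3 := by
  have hL : 0 < Real.log b := Real.log_pos hb
  set L := Real.log b with hLdef
  have he : (fun y => F b y * (((Real.log y)^2 + L^2) / (2*L))) =
      (fun y => if 1 < y ∧ y < b then
        (1/(2*L^2)) * ((Real.log y)^2/y) + (1/2) * (1/y) else 0) := by
    funext y
    by_cases h : 1 < y ∧ y < b
    · simp only [F_def, h, and_self, if_true, ← hLdef]
      have hy0 : (0:ℝ) < y := by linarith [h.1]
      field_simp
    · simp [F_def, h]
  rw [he, int_ite 1 b (le_of_lt hb)]
  rw [intervalIntegral.integral_add, intervalIntegral.integral_const_mul,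
      intervalIntegral.integral_const_mul,
      ii_sq_log_div 1 b (by norm_num) (le_of_lt hb),
      integral_one_div_of_pos (by norm_num) (by linarith)]
  · rw [Real.log_one, div_one, ← hLdef]
    field_simp
    ring
  · apply ContinuousOn.intervalIntegrable
    apply ContinuousOn.mul continuousOn_const
    apply ContinuousOn.div (ContinuousOn.pow ?_ 2) continuousOn_id ?_
    · apply Real.continuousOn_log.mono
      intro u hu
      rw [Set.uIcc_of_le (le_of_lt hb)] at hu
      simp only [Set.mem_compl_iff, Set.mem_singleton_iff]; intro h'; nlinarith [hu.1]
    · intro u hu; rw [Set.uIcc_of_le (le_of_lt hb)] at hu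
      simp only [id]; intro h'; nlinarith [hu.1]
  · apply ContinuousOn.intervalIntegrable
    apply ContinuousOn.mul continuousOn_const
    apply ContinuousOn.div continuousOn_const continuousOn_id
    intro u hu; rw [Set.uIcc_of_le (le_of_lt hb)] at hu
    simp only [id]; intro h'; nlinarith [hu.1]

lemma integral_gF_mul_log_ge (b : ℝ) (hb2 : 2 ≤ b) (hL2 : 2 ≤ Real.log b) :
    2 * Real.log b / 3 ≤ ∫ x, gF b x * Real.log x := by
  have hb : (1:ℝ) < b := by linarith
  have hL : (0:ℝ) < Real.log b := by linarith
  have hL1 : (1:ℝ) ≤ Real.log b := by linarith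
  set L := Real.log b with hLdef
  set I : ℝ → ℝ := fun y => ∫ u, F b u * Real.log (u + y) with hI
  have hswap : ∫ x, gF b x * Real.log x =
      ∫ y, ∫ x, F b (x - y) * F b y * Real.log x ∂volume ∂volume := by
    rw [gF_mul_log_eq b]
    exact MeasureTheory.integral_integral_swap (integrable_FprodLog b hb2 hL1)
  have hinner : ∀ y : ℝ, (∫ x, F b (x - y) * F b y * Real.log x ∂volume) = F b y * I y := by
    intro y
    have he : (fun x => F b (x - y) * F b y * Real.log x) =
        (fun x => F b y * ((fun u => F b u * Real.log (u + y)) (x - y))) := by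
      funext x
      have hxy : x - y + y = x := by ring
      dsimp only
      rw [hxy]; ring
    rw [he, MeasureTheory.integral_const_mul,
        MeasureTheory.integral_sub_right_eq_self (fun u => F b u * Real.log (u + y)) y]
  have hFIint : Integrable (fun y => F b y * I y) := by
    have := (integrable_FprodLog b hb2 hL1).integral_prod_right
    simp only at this
    convert this using 1
    funext y
    exact (hinner y).symm
  have hpt : ∀ y : ℝ, F b y * (((Real.log y)^2 + L^2) / (2*L)) ≤ F b y * I y := by
    intro y
    by_cases hFy : F b y = 0
    · rw [hFy, zero_mul, zero_mul]
    · have hy := F_pos_mem b y hFy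
      have hFypos : 0 < F b y := lt_of_le_of_ne (F_nonneg b hb y) (Ne.symm hFy)
      apply mul_le_mul_of_nonneg_left _ (le_of_lt hFypos)
      rw [← inner_max_integral b hb y hy]
      apply MeasureTheory.integral_mono_of_nonneg
      · filter_upwards with u
        simp only [Pi.zero_apply]
        by_cases hFu : F b u = 0
        · rw [hFu, zero_mul]
        · have hu := F_pos_mem b u hFu
          apply mul_nonneg (F_nonneg b hb u)
          exact le_trans (le_of_lt (Real.log_pos hu.1)) (le_max_left _ _)
      · apply Integrable.mono' (g := Set.indicator (Set.Icc (1:ℝ) b) (fun _ => 2*L))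
        · apply (integrable_indicator_iff measurableSet_Icc).2
          refine integrableOn_const ?_ enorm_ne_top
          rw [Real.volume_Icc]; exact ENNReal.ofReal_ne_top
        · exact ((measurable_F b).mul
            (Real.measurable_log.comp (measurable_id.add_const y))).aestronglyMeasurable
        · filter_upwards with u
          by_cases hFu : F b u = 0
          · rw [hFu, zero_mul]
            simp
            exact Set.indicator_nonneg (fun _ _ => by linarith) u
          · have hu := F_pos_mem b u hFu
            rw [Set.indicator_of_mem (Set.mem_Icc.2 ⟨le_of_lt hu.1, le_of_lt hu.2⟩)]
            have hlogpos : 0 < Real.log (u + y) := Real.log_pos (by linarith [hu.1, hy.1])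
            rw [Real.norm_of_nonneg (mul_nonneg (F_nonneg b hb u) (le_of_lt hlogpos))]
            calc F b u * Real.log (u + y) ≤ 1 * Real.log (u + y) := by
                  apply mul_le_mul_of_nonneg_right (F_bound_simple b hb hL1 u) (le_of_lt hlogpos)
              _ = Real.log (u + y) := one_mul _
              _ ≤ Real.log (2*b) := Real.log_le_log (by linarith [hu.1, hy.1])
                  (by linarith [hu.2, hy.2])
              _ ≤ 2*L := log_2b_le b hb2
      · filter_upwards with u
        by_cases hFu : F b u = 0
        · rw [hFu, zero_mul, zero_mul]
        · have hu := F_pos_mem b u hFu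
          apply mul_le_mul_of_nonneg_left _ (F_nonneg b hb u)
          apply max_le
          · exact Real.log_le_log (by linarith [hu.1]) (by linarith [hy.1])
          · exact Real.log_le_log (by linarith [hy.1]) (by linarith [hu.1])
  have hge : ∫ y, F b y * (((Real.log y)^2 + L^2) / (2*L)) ≤ ∫ y, F b y * I y := by
    apply MeasureTheory.integral_mono_of_nonneg
    · filter_upwards with y
      apply mul_nonneg (F_nonneg b hb y)
      positivity
    · exact hFIint
    · filter_upwards with y; exact hpt y
  rw [hswap]
  simp_rw [hinner]
  calc 2*L/3 = ∫ y, F b y * (((Real.log y)^2 + L^2) / (2*L)) := (integral_F_phi b hb).symm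
    _ ≤ ∫ y, F b y * I y := hge

lemma integral_gF_log_gF_le (b : ℝ) (hb2 : 2 ≤ b) (hL2 : 2 ≤ Real.log b) :
    ∫ x, gF b x * Real.log (gF b x) ≤
      Real.log 4 - Real.log (Real.log b) - 2 * Real.log b / 3 := by
  have hb : (1:ℝ) < b := by linarith
  have hL : (0:ℝ) < Real.log b := by linarith
  have hL1 : (1:ℝ) ≤ Real.log b := by linarith
  set L := Real.log b with hLdef
  set w : ℝ → ℝ := fun x => (Real.log 4 - Real.log L) * gF b x - gF b x * Real.log x with hw
  have hwint : Integrable w :=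
    ((integrable_gF b hb hL1).const_mul _).sub (integrable_gF_mul_log b hb2 hL1)
  have hpt : ∀ x, gF b x * Real.log (gF b x) ≤ w x := by
    intro x
    rw [hw]
    dsimp only
    by_cases hg : gF b x = 0
    · rw [hg]; simp
    · have hgpos : 0 < gF b x := lt_of_le_of_ne (gF_nonneg b hb x) (Ne.symm hg)
      have hx : 2 < x ∧ x < 2*b := by
        by_contra hc
        exact hg (gF_eq_zero b x hc)
      have hx0 : (0:ℝ) < x := by linarith [hx.1]
      have hgle : gF b x ≤ 4 / (x * L) := gF_le b hb2 hL1 x hx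
      have hlogle : Real.log (gF b x) ≤ Real.log 4 - Real.log L - Real.log x := by
        calc Real.log (gF b x) ≤ Real.log (4 / (x * L)) := Real.log_le_log hgpos hgle
          _ = Real.log 4 - Real.log L - Real.log x := by
              rw [Real.log_div (by norm_num) (by positivity), Real.log_mul hx0.ne' hL.ne']
              ring
      calc gF b x * Real.log (gF b x) ≤ gF b x * (Real.log 4 - Real.log L - Real.log x) :=
            mul_le_mul_of_nonneg_left hlogle (le_of_lt hgpos)
        _ = (Real.log 4 - Real.log L) * gF b x - gF b x * Real.log x := by ring
  have hle : ∫ x, gF b x * Real.log (gF b x) ≤ ∫ x, w x :=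
    MeasureTheory.integral_mono (integrable_gF_log_gF b hb2 hL2) hwint hpt
  have hwval : ∫ x, w x = (Real.log 4 - Real.log L) - ∫ x, gF b x * Real.log x := by
    rw [hw]
    rw [MeasureTheory.integral_sub ((integrable_gF b hb hL1).const_mul _)
        (integrable_gF_mul_log b hb2 hL1)]
    rw [MeasureTheory.integral_const_mul, integral_gF b hb hL1, mul_one]
  have hlow := integral_gF_mul_log_ge b hb2 hL2
  calc ∫ x, gF b x * Real.log (gF b x) ≤ ∫ x, w x := hle
    _ = (Real.log 4 - Real.log L) - ∫ x, gF b x * Real.log x := hwval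
    _ ≤ Real.log 4 - Real.log L - 2*L/3 := by linarith

theorem stmt_6 :
    ∀ C > (0 : ℝ), ∃ b > (1 : ℝ),
      ∀ (f g : ℝ → ℝ),
        f = (fun x => if 1 < x ∧ x < b then 1 / (x * Real.log b) else 0) →
        g = (fun x => ∫ y, f (x - y) * f y) →
        Real.exp (2 * (-∫ x, g x * Real.log (g x))) >
          C * Real.exp (2 * (-∫ x, f x * Real.log (f x))) := by
  intro C hC
  set T : ℝ := max (3 * Real.log C + 13) 13 with hT
  set b : ℝ := Real.exp T with hbdef
  have hT13 : (13:ℝ) ≤ T := le_max_right _ _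
  have hTC : 3 * Real.log C + 13 ≤ T := le_max_left _ _
  have hLb : Real.log b = T := Real.log_exp T
  have hb2 : (2:ℝ) ≤ b := by
    have := Real.add_one_le_exp T
    rw [hbdef]; linarith
  have hb1 : (1:ℝ) < b := by linarith
  have hL2 : (2:ℝ) ≤ Real.log b := by rw [hLb]; linarith
  refine ⟨b, hb1, ?_⟩
  intro f g hf hg
  have hfF : f = F b := by rw [hf]; rfl
  have hgG : g = gF b := by
    rw [hg, hfF]; rfl
  rw [hfF, hgG, integral_F_log_F b hb1]
  set L := Real.log b with hLdef
  have hJ := integral_gF_log_gF_le b hb2 hL2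
  have hlog2 : Real.log 2 < 0.6931471808 := Real.log_two_lt_d9
  have hlog4 : Real.log 4 < 1.3862943616 := by
    have : (4:ℝ) = 2^2 := by norm_num
    rw [this, Real.log_pow]
    push_cast
    linarith
  have hlogC : Real.log C + 2 * Real.log 4 < L / 3 := by
    have hLT : L = T := hLb
    nlinarith
  have hrhs : C * Real.exp (2 * (-(-(L / 2 + Real.log L)))) =
      Real.exp (Real.log C + (L + 2 * Real.log L)) := by
    rw [Real.exp_add, Real.exp_log hC]
    ring_nf
  rw [hrhs]
  have hkey : Real.log C + (L + 2 * Real.log L) <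
      2 * (-(Real.log 4 - Real.log L - 2 * L / 3)) := by
    ring_nf
    nlinarith
  calc Real.exp (Real.log C + (L + 2 * Real.log L)) <
        Real.exp (2 * (-(Real.log 4 - Real.log L - 2 * L / 3))) := Real.exp_lt_exp.2 hkey
    _ ≤ Real.exp (2 * (-∫ x, gF b x * Real.log (gF b x))) := by
        apply Real.exp_le_exp.2
        nlinarith [hJ]
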